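/- Let S be a multiset of n real numbers containing exactly one negative element and with total sum zero. The permutation that places the negative element at position ⌊n/2⌋, and the positive elements sorted non-decreasingly alternately at positions 1, n, 2, n−1, 3, n−2, … minimizes ∑_{i=1}^n |P_i^π| over all permutations π of S. -/

import Mathlib

open Finset

/-- Splitting a sum over `range N` into even-index and odd-index parts. -/
private lemma paritySplit (a : ℕ → ℝ) (N : ℕ) :
    ∑ j ∈ Finset.range N, a j
      = ∑ k ∈ Finset.range ((N + 1) / 2), a (2 * k)
        + ∑ t ∈ Finset.range (N / 2), a (2 * t + 1) := by
  induction N with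
  | zero => simp
  | succ N ih =>
    rcases Nat.even_or_odd N with ⟨c, hc⟩ | ⟨c, hc⟩
    · subst hc
      have h1 : (c + c + 1 + 1) / 2 = c + 1 := by omega
      have h2 : (c + c + 1) / 2 = c := by omega
      have h3 : (c + c) / 2 = c := by omega
      have h4 : 2 * c = c + c := by ring
      rw [Finset.sum_range_succ, ih, h2, h3, h1,
        Finset.sum_range_succ (fun k => a (2 * k)) c, h4]
      ring
    · subst hc
      have h1 : (2 * c + 1 + 1 + 1) / 2 = c + 1 := by omega
      have h2 : (2 * c + 1 + 1) / 2 = c + 1 := by omega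
      have h3 : (2 * c + 1) / 2 = c := by omega
      rw [Finset.sum_range_succ, ih, h2, h3, h1,
        Finset.sum_range_succ (fun t => a (2 * t + 1)) c]
      ring

/-- Reflecting a sum over `Ico l n`. -/
private lemma reflectSum (f : ℕ → ℝ) (l n : ℕ) :
    ∑ p ∈ Finset.Ico l n, f (n - 1 - p) = ∑ t ∈ Finset.range (n - l), f t := by
  refine Finset.sum_nbij' (fun p => n - 1 - p) (fun t => n - 1 - t) ?_ ?_ ?_ ?_ ?_
  · intro p hp
    simp only [Finset.mem_Ico] at hp
    simp only [Finset.mem_range]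
    omega
  · intro t ht
    simp only [Finset.mem_range] at ht
    simp only [Finset.mem_Ico]
    omega
  · intro p hp
    simp only [Finset.mem_Ico] at hp
    change n - 1 - (n - 1 - p) = p
    omega
  · intro t ht
    simp only [Finset.mem_range] at ht
    change n - 1 - (n - 1 - t) = t
    omega
  · intro p hp
    rfl

/-- Pulling back a sub-multiset of a mapped multiset. -/
private lemma pullback (a : ℕ → ℝ) :
    ∀ (t : Multiset ℝ) (s : Multiset ℕ), t ≤ Multiset.map a s →
      ∃ u ≤ s, t = Multiset.map a u := by
  intro t
  induction t using Multiset.induction_on with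
  | empty => exact fun s _ => ⟨0, Multiset.zero_le s, rfl⟩
  | cons b t' ih =>
    intro s hle
    have hb : b ∈ Multiset.map a s := Multiset.mem_of_le hle (Multiset.mem_cons_self b t')
    obtain ⟨j, hj, rfl⟩ := Multiset.mem_map.1 hb
    have hs : s = j ::ₘ s.erase j := (Multiset.cons_erase hj).symm
    have ht' : t' ≤ Multiset.map a (s.erase j) := by
      have h1 : (a j ::ₘ t').erase (a j) ≤ (Multiset.map a s).erase (a j) :=
        Multiset.erase_le_erase (a j) hle
      rwa [Multiset.erase_cons_head, hs, Multiset.map_cons, Multiset.erase_cons_head] at h1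
    obtain ⟨u', hu', rfl⟩ := ih (s.erase j) ht'
    refine ⟨j ::ₘ u', ?_, by rw [Multiset.map_cons]⟩
    calc j ::ₘ u' ≤ j ::ₘ s.erase j := Multiset.cons_le_cons j hu'
    _ = s := (Multiset.cons_erase hj)

/-- Sum over a finset of naturals dominates the sum of the first `card` values
of a monotone function. -/
private lemma sortedSum (a : ℕ → ℝ) (N : ℕ)
    (hmono : ∀ i j, i ≤ j → j < N → a i ≤ a j)
    (T : Finset ℕ) (hT : T ⊆ Finset.range N) :
    ∑ j ∈ Finset.range T.card, a j ≤ ∑ j ∈ T, a j := by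
  set c := T.card with hc
  let f := T.orderEmbOfFin hc.symm
  have hmem : ∀ i : Fin c, f i ∈ T := fun i => T.orderEmbOfFin_mem hc.symm i
  have hge : ∀ i : Fin c, (i : ℕ) ≤ f i := by
    have : ∀ k : ℕ, ∀ i : Fin c, (i : ℕ) = k → k ≤ f i := by
      intro k
      induction k with
      | zero => intro i _; exact Nat.zero_le _
      | succ k ihk =>
        intro i hi
        have hk : k < c := by omega
        have hlt : (⟨k, hk⟩ : Fin c) < i := by
          simp [Fin.lt_def, hi]
        have h1 : f ⟨k, hk⟩ < f i := f.strictMono hlt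
        have h2 := ihk ⟨k, hk⟩ rfl
        omega
    exact fun i => this i.val i rfl
  have hsum : ∑ j ∈ T, a j = ∑ i : Fin c, a (f i) := by
    refine (Finset.sum_bij (fun (i : Fin c) _ => f i) ?_ ?_ ?_ ?_).symm
    · intro i _; exact hmem i
    · intro i _ j _ hij; exact f.injective hij
    · intro b hb
      have : b ∈ Set.range f := by
        rw [Finset.range_orderEmbOfFin]; exact hb
      obtain ⟨i, hi⟩ := this
      exact ⟨i, Finset.mem_univ i, hi⟩
    · intro i _; rfl
  rw [hsum, ← Fin.sum_univ_eq_sum_range]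
  refine Finset.sum_le_sum ?_
  intro i _
  have hfi : f i < N := Finset.mem_range.1 (hT (hmem i))
  exact hmono i (f i) (hge i) hfi

theorem stmt_10 (n : ℕ) (hn : 0 < n) (s : ℕ → ℝ) (x : ℝ) (a : ℕ → ℝ)
    (hx : x < 0)
    (ha : ∀ i, i < n - 1 → 0 ≤ a i)
    (hmono : ∀ i j, i ≤ j → j < n - 1 → a i ≤ a j)
    (hS : Multiset.map s (Multiset.range n) = x ::ₘ Multiset.map a (Multiset.range (n - 1)))
    (hsum : ∑ i ∈ Finset.range n, s i = 0)
    (π' : ℕ → ℝ)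
    (hπx : π' (n / 2) = x)
    (hπa : ∀ j, j < n - 1 →
      (j % 2 = 0 → π' (j / 2) = a j) ∧ (j % 2 = 1 → π' (n - 1 - j / 2) = a j)) :
    ∀ π : ℕ → ℝ, Multiset.map π (Multiset.range n) = Multiset.map s (Multiset.range n) →
      ∑ i ∈ Finset.range n, |∑ j ∈ Finset.range (i + 1), π' j| ≤
        ∑ i ∈ Finset.range n, |∑ j ∈ Finset.range (i + 1), π j| := by
  intro π hπ
  -- A k = sum of the k smallest nonnegative elements
  set A : ℕ → ℝ := fun k => ∑ j ∈ Finset.range k, a j with hA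
  -- basic conversions between Finset sums and multiset sums
  have hsum_eq : ∀ f : ℕ → ℝ, ∀ N : ℕ,
      ∑ i ∈ Finset.range N, f i = (Multiset.map f (Multiset.range N)).sum := by
    intro f N
    rfl
  -- x + A (n-1) = 0
  have hxA : x + ∑ j ∈ Finset.range (n - 1), a j = 0 := by
    have h1 := congrArg Multiset.sum hS
    rw [Multiset.sum_cons] at h1
    rw [hsum_eq s n] at hsum
    rw [hsum_eq a (n-1), ← h1, hsum]
  have hA_nonneg : ∀ k, k ≤ n - 1 → 0 ≤ A k := by
    intro k hk
    refine Finset.sum_nonneg ?_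
    intro j hj
    exact ha j (by simp at hj; omega)
  have hA_mono : ∀ k k', k ≤ k' → k' ≤ n - 1 → A k ≤ A k' := by
    intro k k' hkk' hk'
    refine Finset.sum_le_sum_of_subset_of_nonneg
      (Finset.range_subset_range.2 hkk') ?_
    intro j hj _
    exact ha j (by simp at hj; omega)
  -- total sum of π is 0
  have htotπ : ∑ p ∈ Finset.range n, π p = 0 := by
    rw [hsum_eq π n, hπ, ← hsum_eq s n, hsum]
  -- position of x in π
  have hxmem : x ∈ Multiset.map π (Multiset.range n) := by
    rw [hπ, hS]; exact Multiset.mem_cons_self x _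
  obtain ⟨m, hmrange, hmx⟩ := Multiset.mem_map.1 hxmem
  rw [Multiset.mem_range] at hmrange
  -- uniqueness of x-position and nonnegativity elsewhere
  have hnonneg : ∀ p, p < n → p ≠ m → 0 ≤ π p := by
    intro p hp hpm
    have hpmem : π p ∈ Multiset.map π (Multiset.range n) :=
      Multiset.mem_map.2 ⟨p, Multiset.mem_range.2 hp, rfl⟩
    rw [hπ, hS, Multiset.mem_cons] at hpmem
    rcases hpmem with h | h
    · -- π p = x : contradiction with uniqueness of count
      exfalso
      have hcount : (Multiset.map π (Multiset.range n)).count x = 1 := by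
        rw [hπ, hS, Multiset.count_cons_self]
        have : (Multiset.map a (Multiset.range (n-1))).count x = 0 := by
          rw [Multiset.count_eq_zero]
          intro hmem
          obtain ⟨j, hj, hjx⟩ := Multiset.mem_map.1 hmem
          rw [Multiset.mem_range] at hj
          have := ha j hj
          rw [hjx] at this
          linarith
        rw [this]
      rw [Multiset.count_map] at hcount
      have hnd : (Multiset.filter (fun q => x = π q) (Multiset.range n)).Nodup :=
        Multiset.Nodup.filter _ (Multiset.nodup_range n)
      have hsub : ({p, m} : Finset ℕ)
          ⊆ ⟨Multiset.filter (fun q => x = π q) (Multiset.range n), hnd⟩ := by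
        intro q hq
        simp only [Finset.mem_insert, Finset.mem_singleton] at hq
        have : q ∈ Multiset.filter (fun q => x = π q) (Multiset.range n) := by
          rw [Multiset.mem_filter, Multiset.mem_range]
          rcases hq with rfl | rfl
          exacts [⟨hp, h.symm⟩, ⟨hmrange, hmx.symm⟩]
        exact this
      have hle := Finset.card_le_card hsub
      rw [Finset.card_insert_of_notMem (by simpa using hpm), Finset.card_singleton] at hle
      have hcards : (⟨Multiset.filter (fun q => x = π q) (Multiset.range n), hnd⟩ : Finset ℕ).card
          = Multiset.card (Multiset.filter (fun q => x = π q) (Multiset.range n)) := rfl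
      rw [hcards] at hle
      omega
    · obtain ⟨j, hj, hjx⟩ := Multiset.mem_map.1 h
      rw [Multiset.mem_range] at hj
      rw [← hjx]
      exact ha j hj
  -- key lemma: sum of π over a set avoiding m dominates A(card)
  have keyU : ∀ U : Finset ℕ, U ⊆ Finset.range n → m ∉ U →
      A U.card ≤ ∑ p ∈ U, π p := by
    intro U hUsub hUm
    -- map π U.val ≤ map a (range (n-1))
    have hUle : U.val ≤ ((Finset.range n).erase m).val := by
      refine Finset.val_le_iff.2 ?_
      intro q hq
      exact Finset.mem_erase.2 ⟨fun h => hUm (h ▸ hq), hUsub hq⟩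
    have hmapval : Multiset.map π ((Finset.range n).erase m).val
        = Multiset.map a (Multiset.range (n - 1)) := by
      have hcons : (Finset.range n).val = m ::ₘ ((Finset.range n).erase m).val := by
        rw [Finset.erase_val]
        exact (Multiset.cons_erase
          (show m ∈ (Finset.range n).val by simpa using hmrange)).symm
      have h1 : Multiset.map π (Finset.range n).val
          = x ::ₘ Multiset.map π ((Finset.range n).erase m).val := by
        rw [hcons, Multiset.map_cons, hmx]
      have h2 : Multiset.map π (Finset.range n).val
          = x ::ₘ Multiset.map a (Multiset.range (n-1)) := by
        have : (Finset.range n).val = Multiset.range n := Finset.range_val n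
        rw [this, hπ, hS]
      rw [h1] at h2
      exact (Multiset.cons_inj_right x).1 h2
    have hle2 : Multiset.map π U.val ≤ Multiset.map a (Multiset.range (n - 1)) := by
      rw [← hmapval]
      exact Multiset.map_le_map hUle
    obtain ⟨u, hu, hueq⟩ := pullback a (Multiset.map π U.val) _ hle2
    have hund : u.Nodup := Multiset.nodup_of_le hu (Multiset.nodup_range (n-1))
    set T : Finset ℕ := ⟨u, hund⟩ with hT
    have hTsub : T ⊆ Finset.range (n - 1) := by
      intro q hq
      have : q ∈ u := hq
      have := Multiset.mem_of_le hu this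
      simpa using this
    have hTcard : T.card = U.card := by
      have h1 : Multiset.card (Multiset.map π U.val) = U.card := by
        rw [Multiset.card_map]; rfl
      have h2 : Multiset.card (Multiset.map a u) = T.card := by
        rw [Multiset.card_map]; rfl
      rw [hueq] at h1
      rw [h2] at h1
      exact h1
    have hTsum : ∑ p ∈ U, π p = ∑ j ∈ T, a j := by
      have h1 : ∑ p ∈ U, π p = (Multiset.map π U.val).sum := rfl
      have h2 : ∑ j ∈ T, a j = (Multiset.map a u).sum := rfl
      rw [h1, h2, hueq]
    rw [hTsum, ← hTcard]
    exact sortedSum a (n-1) hmono T hTsub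
  -- lower bound for the π side
  have hπside : ∑ v ∈ Finset.range n, A (n - (1 + 2 * v))
      ≤ ∑ i ∈ Finset.range n, |∑ j ∈ Finset.range (i + 1), π j| := by
    -- rewrite objective
    have hsplit : ∑ i ∈ Finset.range n, |∑ j ∈ Finset.range (i + 1), π j|
        = ∑ i ∈ Finset.range m, (∑ j ∈ Finset.range (i + 1), π j)
          + ∑ i ∈ Finset.Ico m n, (∑ j ∈ Finset.Ico (i + 1) n, π j) := by
      rw [Finset.range_eq_Ico, ← Finset.sum_Ico_consecutive _ (Nat.zero_le m) (le_of_lt hmrange),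
        ← Finset.range_eq_Ico]
      congr 1
      · refine Finset.sum_congr rfl ?_
        intro i hi
        rw [Finset.mem_range] at hi
        refine abs_of_nonneg (Finset.sum_nonneg ?_)
        intro j hj
        rw [Finset.mem_range] at hj
        exact hnonneg j (by omega) (by omega)
      · refine Finset.sum_congr rfl ?_
        intro i hi
        rw [Finset.mem_Ico] at hi
        have hpre : ∑ j ∈ Finset.range (i+1), π j
            = - ∑ j ∈ Finset.Ico (i+1) n, π j := by
          have h := Finset.sum_Ico_consecutive π (Nat.zero_le (i+1)) (show i+1 ≤ n by omega)
          rw [← Finset.range_eq_Ico, ← Finset.range_eq_Ico] at h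
          rw [htotπ] at h
          linarith
        rw [hpre, abs_neg]
        refine abs_of_nonneg (Finset.sum_nonneg ?_)
        intro j hj
        rw [Finset.mem_Ico] at hj
        exact hnonneg j (by omega) (by omega)
    rw [hsplit]
    -- reindex the two sums by distance from m
    have hre1 : ∑ i ∈ Finset.range m, (∑ j ∈ Finset.range (i + 1), π j)
        = ∑ v ∈ Finset.range n, (∑ j ∈ Finset.range (m - v), π j) := by
      rw [← Finset.sum_range_reflect (fun i => ∑ j ∈ Finset.range (i + 1), π j) m]
      have h1 : ∑ v ∈ Finset.range m, (∑ j ∈ Finset.range (m - 1 - v + 1), π j)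
          = ∑ v ∈ Finset.range m, (∑ j ∈ Finset.range (m - v), π j) := by
        refine Finset.sum_congr rfl ?_
        intro v hv
        rw [Finset.mem_range] at hv
        rw [show m - 1 - v + 1 = m - v by omega]
      rw [h1]
      refine Finset.sum_subset (Finset.range_subset_range.2 (le_of_lt hmrange)) ?_
      intro v _ hv
      rw [Finset.mem_range] at hv
      have : m - v = 0 := by omega
      rw [this]
      simp
    have hre2 : ∑ i ∈ Finset.Ico m n, (∑ j ∈ Finset.Ico (i + 1) n, π j)
        = ∑ v ∈ Finset.range n, (∑ j ∈ Finset.Ico (m + v + 1) n, π j) := by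
      rw [Finset.sum_Ico_eq_sum_range]
      have h1 : ∑ v ∈ Finset.range (n - m), (∑ j ∈ Finset.Ico (m + v + 1) n, π j)
          = ∑ v ∈ Finset.range n, (∑ j ∈ Finset.Ico (m + v + 1) n, π j) := by
        refine Finset.sum_subset (Finset.range_subset_range.2 (by omega)) ?_
        intro v _ hv
        rw [Finset.mem_range] at hv
        rw [Finset.Ico_eq_empty (by omega)]
        simp
      rw [← h1]
    rw [hre1, hre2, ← Finset.sum_add_distrib]
    refine Finset.sum_le_sum ?_
    intro v _
    set U : Finset ℕ := Finset.range (m - v) ∪ Finset.Ico (m + v + 1) n with hU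
    have hdisj : Disjoint (Finset.range (m - v)) (Finset.Ico (m + v + 1) n) := by
      rw [Finset.disjoint_left]
      intro q hq1 hq2
      rw [Finset.mem_range] at hq1
      rw [Finset.mem_Ico] at hq2
      omega
    have hUsum : ∑ p ∈ U, π p
        = ∑ j ∈ Finset.range (m - v), π j + ∑ j ∈ Finset.Ico (m + v + 1) n, π j :=
      Finset.sum_union hdisj
    have hUcard : U.card = (m - v) + (n - (m + v + 1)) := by
      rw [hU, Finset.card_union_of_disjoint hdisj, Finset.card_range, Nat.card_Ico]
    have hUsub : U ⊆ Finset.range n := by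
      intro q hq
      rw [hU, Finset.mem_union, Finset.mem_range, Finset.mem_Ico] at hq
      rw [Finset.mem_range]
      omega
    have hUm : m ∉ U := by
      rw [hU, Finset.mem_union, Finset.mem_range, Finset.mem_Ico]
      push_neg
      omega
    have hcard_le : U.card ≤ n - 1 := by
      rw [hUcard]
      omega
    calc A (n - (1 + 2 * v)) ≤ A U.card := by
          refine hA_mono _ _ ?_ hcard_le
          rw [hUcard]
          omega
    _ ≤ ∑ p ∈ U, π p := keyU U hUsub hUm
    _ = _ := hUsum
  -- now the π' side: exact computation
  -- explicit values of π'
  have hπ'1 : ∀ k, k < n / 2 → π' k = a (2 * k) := by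
    intro k hk
    have h2k : 2 * k < n - 1 := by omega
    have := (hπa (2 * k) h2k).1 (by omega)
    rwa [show 2 * k / 2 = k by omega] at this
  have hπ'2 : ∀ p, n / 2 < p → p < n → π' p = a (2 * (n - 1 - p) + 1) := by
    intro p hp1 hp2
    have hj : 2 * (n - 1 - p) + 1 < n - 1 := by omega
    have := (hπa (2 * (n - 1 - p) + 1) hj).2 (by omega)
    rwa [show n - 1 - (2 * (n - 1 - p) + 1) / 2 = p by omega] at this
  -- total sum of π' over range n is 0
  have htotπ' : ∑ p ∈ Finset.range n, π' p = 0 := by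
    have hsplit : ∑ p ∈ Finset.range n, π' p
        = ∑ p ∈ Finset.range (n / 2), π' p + (π' (n / 2)
          + ∑ p ∈ Finset.Ico (n / 2 + 1) n, π' p) := by
      rw [Finset.range_eq_Ico,
        ← Finset.sum_Ico_consecutive _ (Nat.zero_le (n/2)) (show n/2 ≤ n by omega),
        ← Finset.range_eq_Ico, Finset.sum_eq_sum_Ico_succ_bot (show n/2 < n by omega)]
    rw [hsplit, hπx]
    have h1 : ∑ p ∈ Finset.range (n / 2), π' p
        = ∑ k ∈ Finset.range (n / 2), a (2 * k) := by
      refine Finset.sum_congr rfl ?_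
      intro k hk
      exact hπ'1 k (Finset.mem_range.1 hk)
    have h2 : ∑ p ∈ Finset.Ico (n / 2 + 1) n, π' p
        = ∑ t ∈ Finset.range (n - (n / 2 + 1)), a (2 * t + 1) := by
      have e1 : ∑ p ∈ Finset.Ico (n / 2 + 1) n, π' p
          = ∑ p ∈ Finset.Ico (n / 2 + 1) n, (fun t => a (2 * t + 1)) (n - 1 - p) := by
        refine Finset.sum_congr rfl ?_
        intro p hp
        rw [Finset.mem_Ico] at hp
        exact hπ'2 p hp.1 hp.2
      rw [e1]
      exact reflectSum (fun t => a (2 * t + 1)) (n / 2 + 1) n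
    rw [h1, h2]
    have hps := paritySplit a (n - 1)
    rw [show (n - 1 + 1) / 2 = n / 2 by omega, show (n - 1) / 2 = n - (n/2 + 1) by omega]
      at hps
    linarith [hps, hxA]
  -- compute the π' objective
  have hπ'side : ∑ i ∈ Finset.range n, |∑ j ∈ Finset.range (i + 1), π' j|
      = ∑ v ∈ Finset.range n, A (n - (1 + 2 * v)) := by
    have hsplit : ∑ i ∈ Finset.range n, |∑ j ∈ Finset.range (i + 1), π' j|
        = ∑ i ∈ Finset.range (n / 2), (∑ k ∈ Finset.range (i + 1), a (2 * k))
          + ∑ i ∈ Finset.Ico (n / 2) n, (∑ t ∈ Finset.range (n - 1 - i), a (2 * t + 1)) := by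
      rw [Finset.range_eq_Ico,
        ← Finset.sum_Ico_consecutive _ (Nat.zero_le (n/2)) (show n/2 ≤ n by omega),
        ← Finset.range_eq_Ico]
      congr 1
      · refine Finset.sum_congr rfl ?_
        intro i hi
        rw [Finset.mem_range] at hi
        have hval : ∑ j ∈ Finset.range (i + 1), π' j
            = ∑ k ∈ Finset.range (i + 1), a (2 * k) := by
          refine Finset.sum_congr rfl ?_
          intro k hk
          rw [Finset.mem_range] at hk
          exact hπ'1 k (by omega)
        rw [hval]
        refine abs_of_nonneg (Finset.sum_nonneg ?_)
        intro k hk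
        rw [Finset.mem_range] at hk
        exact ha (2 * k) (by omega)
      · refine Finset.sum_congr rfl ?_
        intro i hi
        rw [Finset.mem_Ico] at hi
        have htail : ∑ j ∈ Finset.Ico (i + 1) n, π' j
            = ∑ t ∈ Finset.range (n - (i + 1)), a (2 * t + 1) := by
          have e1 : ∑ j ∈ Finset.Ico (i + 1) n, π' j
              = ∑ j ∈ Finset.Ico (i + 1) n, (fun t => a (2 * t + 1)) (n - 1 - j) := by
            refine Finset.sum_congr rfl ?_
            intro p hp
            rw [Finset.mem_Ico] at hp
            exact hπ'2 p (by omega) hp.2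
          rw [e1]
          exact reflectSum (fun t => a (2 * t + 1)) (i + 1) n
        have hpre : ∑ j ∈ Finset.range (i+1), π' j
            = - ∑ j ∈ Finset.Ico (i+1) n, π' j := by
          have h := Finset.sum_Ico_consecutive π' (Nat.zero_le (i+1)) (show i+1 ≤ n by omega)
          rw [← Finset.range_eq_Ico, ← Finset.range_eq_Ico] at h
          rw [htotπ'] at h
          linarith
        rw [hpre, abs_neg, htail, show n - (i + 1) = n - 1 - i by omega]
        refine abs_of_nonneg (Finset.sum_nonneg ?_)
        intro t ht
        rw [Finset.mem_range] at ht
        exact ha (2 * t + 1) (by omega)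
    rw [hsplit]
    -- reindex both parts
    have hre1 : ∑ i ∈ Finset.range (n / 2), (∑ k ∈ Finset.range (i + 1), a (2 * k))
        = ∑ v ∈ Finset.range n, (∑ k ∈ Finset.range (n / 2 - v), a (2 * k)) := by
      rw [← Finset.sum_range_reflect (fun i => ∑ k ∈ Finset.range (i + 1), a (2 * k)) (n / 2)]
      have h1 : ∑ v ∈ Finset.range (n / 2), (∑ k ∈ Finset.range (n / 2 - 1 - v + 1), a (2 * k))
          = ∑ v ∈ Finset.range (n / 2), (∑ k ∈ Finset.range (n / 2 - v), a (2 * k)) := by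
        refine Finset.sum_congr rfl ?_
        intro v hv
        rw [Finset.mem_range] at hv
        rw [show n / 2 - 1 - v + 1 = n / 2 - v by omega]
      rw [h1]
      refine Finset.sum_subset (Finset.range_subset_range.2 (by omega)) ?_
      intro v _ hv
      rw [Finset.mem_range] at hv
      rw [show n / 2 - v = 0 by omega]
      simp
    have hre2 : ∑ i ∈ Finset.Ico (n / 2) n, (∑ t ∈ Finset.range (n - 1 - i), a (2 * t + 1))
        = ∑ v ∈ Finset.range n, (∑ t ∈ Finset.range (n - 1 - n / 2 - v), a (2 * t + 1)) := by
      rw [Finset.sum_Ico_eq_sum_range]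
      have h1 : ∑ v ∈ Finset.range (n - n / 2),
            (∑ t ∈ Finset.range (n - 1 - (n / 2 + v)), a (2 * t + 1))
          = ∑ v ∈ Finset.range (n - n / 2),
            (∑ t ∈ Finset.range (n - 1 - n / 2 - v), a (2 * t + 1)) := by
        refine Finset.sum_congr rfl ?_
        intro v hv
        rw [show n - 1 - (n / 2 + v) = n - 1 - n / 2 - v by omega]
      rw [h1]
      refine Finset.sum_subset (Finset.range_subset_range.2 (by omega)) ?_
      intro v _ hv
      rw [Finset.mem_range] at hv
      rw [show n - 1 - n / 2 - v = 0 by omega]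
      simp
    rw [hre1, hre2, ← Finset.sum_add_distrib]
    refine Finset.sum_congr rfl ?_
    intro v _
    simp only [hA]
    have hps := paritySplit a (n - (1 + 2 * v))
    rw [show (n - (1 + 2 * v) + 1) / 2 = n / 2 - v by omega,
      show (n - (1 + 2 * v)) / 2 = n - 1 - n / 2 - v by omega] at hps
    rw [hps]
  rw [hπ'side]
  exact hπside
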